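/- Let M be a loopless matroid on E, m ≥ 1, and Q = Q_m(M) the free m-cone of M. Then every flat of M is a flat of Q, and the restriction Q|E equals M. -/

import Mathlib

open Set Matroid

namespace ConePaper

variable {α : Type*}

/-- The rank of a set in a matroid: the supremum of sizes of independent subsets. -/
noncomputable def rk (M : Matroid α) (X : Set α) : ℕ :=
  sSup {n : ℕ | ∃ I, M.Indep I ∧ I ⊆ X ∧ I.ncard = n}

/-- A loopless matroid: every singleton of the ground set is independent. -/
def Loopless (M : Matroid α) : Prop := ∀ e ∈ M.E, M.Indep {e}

/-- A coloop: an element of the ground set lying in every base. -/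
def IsColoop (M : Matroid α) (e : α) : Prop := e ∈ M.E ∧ ∀ B, M.IsBase B → e ∈ B

/-- A circuit: a minimal dependent set. -/
def IsCircuit (M : Matroid α) (C : Set α) : Prop :=
  C ⊆ M.E ∧ ¬ M.Indep C ∧ ∀ x ∈ C, M.Indep (C \ {x})

/-- A cyclic flat: a flat whose restriction has no coloops. -/
def CyclicFlat (M : Matroid α) (F : Set α) : Prop :=
  M.IsFlat F ∧ ∀ e ∈ F, ¬ IsColoop (M ↾ F) e

/-- Deletion of a set from a matroid. -/
def mdel (M : Matroid α) (X : Set α) : Matroid α := M ↾ (M.E \ X)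

/-- The cone `q(S) = S ∪ {a} ∪ ⋃_{e ∈ S} T e`. -/
def cone (T : α → Set α) (a : α) (S : Set α) : Set α := S ∪ {a} ∪ ⋃ e ∈ S, T e

/-- The projection `p(S) = (S ∩ E) ∪ {e ∈ E : S ∩ T e ≠ ∅}`. -/
def proj (E : Set α) (T : α → Set α) (S : Set α) : Set α :=
  (S ∩ E) ∪ {e ∈ E | (S ∩ T e).Nonempty}

/-- `FreeCone M Q T a m` says that `Q` is the free `m`-cone of the loopless
matroid `M`, with extra points `T e` (of size `m`) for `e ∈ M.E` and tip `a`: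
its cyclic flats are those of `M` (with the same rank) together with the cones
of nonempty flats of `M` (with rank one greater). -/
structure FreeCone (M Q : Matroid α) (T : α → Set α) (a : α) (m : ℕ) : Prop where
  hm : 1 ≤ m
  hMfin : M.E.Finite
  hloopless : Loopless M
  hTfin : ∀ e ∈ M.E, (T e).Finite
  hTcard : ∀ e ∈ M.E, (T e).ncard = m
  hTdisjE : ∀ e ∈ M.E, Disjoint (T e) M.E
  hTdisj : ∀ e ∈ M.E, ∀ f ∈ M.E, e ≠ f → Disjoint (T e) (T f)
  ha : a ∉ M.E ∪ ⋃ e ∈ M.E, T e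
  hQE : Q.E = M.E ∪ (⋃ e ∈ M.E, T e) ∪ {a}
  hcyclic : ∀ F, CyclicFlat Q F ↔
      (CyclicFlat M F ∨ ∃ F', M.IsFlat F' ∧ F'.Nonempty ∧ F = cone T a F')
  hrank1 : ∀ F, CyclicFlat M F → rk Q F = rk M F
  hrank2 : ∀ F', M.IsFlat F' → F'.Nonempty → rk Q (cone T a F') = rk M F' + 1

/-- A flag of a rank-`k` matroid: a chain of flats, one of each rank `0,…,k`. -/
def IsFlag (N : Matroid α) (k : ℕ) (X : ℕ → Set α) : Prop :=
  (∀ i ≤ k, N.IsFlat (X i) ∧ rk N (X i) = i) ∧ ∀ i < k, X i ⊂ X (i + 1)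

/-! ### Auxiliary lemmas -/

lemma flat_closure (N : Matroid α) (X : Set α) : N.IsFlat (N.closure X) := by
  rw [Matroid.closure_def]
  have hne : {F | N.IsFlat F ∧ X ∩ N.E ⊆ F}.Nonempty :=
    ⟨N.E, N.ground_isFlat, inter_subset_right⟩
  have := hne.to_subtype
  rw [sInter_eq_iInter]
  exact Matroid.IsFlat.iInter fun F ↦ F.2.1

lemma rk_bddAbove {N : Matroid α} (hfin : N.E.Finite) (X : Set α) :
    BddAbove {n : ℕ | ∃ I, N.Indep I ∧ I ⊆ X ∧ I.ncard = n} := by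
  refine ⟨N.E.ncard, ?_⟩
  rintro n ⟨I, hI, -, rfl⟩
  exact ncard_le_ncard hI.subset_ground hfin

lemma ncard_le_rk {N : Matroid α} (hfin : N.E.Finite) {I X : Set α}
    (hI : N.Indep I) (hIX : I ⊆ X) : I.ncard ≤ rk N X :=
  le_csSup (rk_bddAbove hfin X) ⟨I, hI, hIX, rfl⟩

/-- The key lemma: independence is characterized by the cyclic flats with their ranks. -/
lemma indep_iff_forall_cyclicFlat {N : Matroid α} (hfin : N.E.Finite) {X : Set α}
    (hXE : X ⊆ N.E) :
    N.Indep X ↔ ∀ Z, CyclicFlat N Z → (X ∩ Z).ncard ≤ rk N Z := by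
  constructor
  · intro hX Z _
    exact ncard_le_rk hfin (hX.inter_right Z) inter_subset_right
  intro h
  by_contra hdep
  -- find a minimal dependent subset `C` of `X` (a circuit)
  set S := {n : ℕ | ∃ C, C ⊆ X ∧ ¬ N.Indep C ∧ C.ncard = n} with hSdef
  have hSne : S.Nonempty := ⟨X.ncard, X, Subset.rfl, hdep, rfl⟩
  obtain ⟨C, hCX, hCdep, hCcard⟩ := Nat.sInf_mem hSne
  have hCE : C ⊆ N.E := hCX.trans hXE
  have hCfin : C.Finite := hfin.subset hCE
  have hmin : ∀ x ∈ C, N.Indep (C \ {x}) := by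
    intro x hx
    by_contra hdx
    have hmem : (C \ {x}).ncard ∈ S := ⟨C \ {x}, diff_subset.trans hCX, hdx, rfl⟩
    have hle := Nat.sInf_le hmem
    have hlt : (C \ {x}).ncard < C.ncard := ncard_diff_singleton_lt_of_mem hx hCfin
    omega
  have hCne : C.Nonempty := by
    rcases C.eq_empty_or_nonempty with rfl | hne
    · exact absurd N.empty_indep hCdep
    · exact hne
  have hxcl : ∀ x ∈ C, x ∈ N.closure (C \ {x}) := by
    intro x hx
    by_contra hcl
    have hins : N.Indep (insert x (C \ {x})) := by
      rw [(hmin x hx).insert_indep_iff_of_notMem (by simp)]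
      exact ⟨hCE hx, hcl⟩
    rw [insert_diff_singleton, insert_eq_of_mem hx] at hins
    exact hCdep hins
  have hclC : ∀ x ∈ C, N.closure (C \ {x}) = N.closure C := by
    intro x hx
    refine (N.closure_subset_closure diff_subset).antisymm ?_
    refine Matroid.closure_subset_closure_of_subset_closure ?_
    intro y hy
    rcases eq_or_ne y x with rfl | hne
    · exact hxcl y hy
    · exact N.subset_closure (C \ {x}) (diff_subset.trans hCE) ⟨hy, hne⟩
  set Z := N.closure C with hZdef
  have hCZ : C ⊆ Z := N.subset_closure C hCE
  have hZE : Z ⊆ N.E := N.closure_subset_ground C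
  have hZfin : Z.Finite := hfin.subset hZE
  have hbase : ∀ x ∈ C, (N ↾ Z).IsBase (C \ {x}) := by
    intro x hx
    rw [isBase_restrict_iff hZE]
    refine (hmin x hx).isBasis_of_subset_of_subset_closure (diff_subset.trans hCZ) ?_
    rw [hclC x hx]
  have hZcyc : CyclicFlat N Z := by
    refine ⟨flat_closure N C, fun e heZ hcol ↦ ?_⟩
    by_cases heC : e ∈ C
    · have := hcol.2 _ (hbase e heC)
      exact this.2 rfl
    · obtain ⟨x0, hx0⟩ := hCne
      have := hcol.2 _ (hbase x0 hx0)
      exact heC this.1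
  have hrkZ : rk N Z ≤ C.ncard - 1 := by
    obtain ⟨x0, hx0⟩ := hCne
    have hBcard : (C \ {x0}).ncard = C.ncard - 1 :=
      ncard_diff_singleton_of_mem hx0
    rw [← hBcard]
    refine csSup_le ⟨0, ∅, N.empty_indep, empty_subset _, by simp⟩ ?_
    rintro n ⟨I, hI, hIZ, rfl⟩
    by_contra hgt
    push_neg at hgt
    have hIfin : I.Finite := hfin.subset hI.subset_ground
    have hBfin : (C \ {x0}).Finite := hCfin.diff
    have hIr : (N ↾ Z).Indep I := restrict_indep_iff.2 ⟨hI, hIZ⟩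
    have hB := hbase x0 hx0
    have henc : (C \ {x0}).encard < I.encard := by
      rw [← hBfin.cast_ncard_eq, ← hIfin.cast_ncard_eq]
      exact_mod_cast hgt
    obtain ⟨e, he, hins⟩ := hB.indep.augment hIr henc
    have hdep := hB.insert_dep (e := e) ⟨hIZ he.1, he.2⟩
    exact hdep.not_indep hins
  have hkey := h Z hZcyc
  have hCXZ : C ⊆ X ∩ Z := subset_inter hCX hCZ
  have hle : C.ncard ≤ (X ∩ Z).ncard :=
    ncard_le_ncard hCXZ (hZfin.inter_of_right X)
  have hpos : 0 < C.ncard := (ncard_pos hCfin).2 hCne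
  omega

lemma ME_subset_QE {M Q : Matroid α} {T : α → Set α} {a : α} {m : ℕ}
    (hFC : FreeCone M Q T a m) : M.E ⊆ Q.E := by
  rw [hFC.hQE]
  exact fun x hx ↦ Or.inl (Or.inl hx)

lemma QE_finite {M Q : Matroid α} {T : α → Set α} {a : α} {m : ℕ}
    (hFC : FreeCone M Q T a m) : Q.E.Finite := by
  rw [hFC.hQE]
  exact (hFC.hMfin.union (hFC.hMfin.biUnion hFC.hTfin)).union (finite_singleton a)

lemma cone_inter_ground {M Q : Matroid α} {T : α → Set α} {a : α} {m : ℕ}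
    (hFC : FreeCone M Q T a m) {F' : Set α} (hF' : M.IsFlat F') :
    cone T a F' ∩ M.E = F' := by
  have hF'E := hF'.subset_ground
  apply subset_antisymm
  · rintro x ⟨hx, hxE⟩
    rcases hx with (hx | hx) | hx
    · exact hx
    · exact absurd (Or.inl hxE : x ∈ M.E ∪ ⋃ e ∈ M.E, T e) (hx ▸ hFC.ha)
    · simp only [mem_iUnion] at hx
      obtain ⟨e, he, hxe⟩ := hx
      exact absurd hxE (disjoint_left.1 (hFC.hTdisjE e (hF'E he)) hxe)
  · intro x hx
    exact ⟨Or.inl (Or.inl hx), hF'E hx⟩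

lemma indep_iff_of_freeCone {M Q : Matroid α} {T : α → Set α} {a : α} {m : ℕ}
    (hFC : FreeCone M Q T a m) {I : Set α} (hIE : I ⊆ M.E) :
    Q.Indep I ↔ M.Indep I := by
  have hQfin := QE_finite hFC
  have hMfin := hFC.hMfin
  have hIQ : I ⊆ Q.E := hIE.trans (ME_subset_QE hFC)
  constructor
  · intro hQI
    rw [indep_iff_forall_cyclicFlat hMfin hIE]
    intro Z hZ
    have hc := ncard_le_rk hQfin (hQI.inter_right Z) inter_subset_right
    rwa [hFC.hrank1 Z hZ] at hc
  · intro hMI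
    rw [indep_iff_forall_cyclicFlat hQfin hIQ]
    intro Z hZQ
    rcases (hFC.hcyclic Z).1 hZQ with hZ | ⟨F', hF', hF'ne, rfl⟩
    · rw [hFC.hrank1 Z hZ]
      exact ncard_le_rk hMfin (hMI.inter_right Z) inter_subset_right
    · rw [hFC.hrank2 F' hF' hF'ne]
      have hint : I ∩ cone T a F' = I ∩ F' := by
        have hci := cone_inter_ground hFC hF'
        ext x
        simp only [mem_inter_iff]
        constructor
        · rintro ⟨h1, h2⟩
          have hx : x ∈ cone T a F' ∩ M.E := ⟨h2, hIE h1⟩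
          rw [hci] at hx
          exact ⟨h1, hx⟩
        · rintro ⟨h1, h2⟩
          exact ⟨h1, Or.inl (Or.inl h2)⟩
      rw [hint]
      have := ncard_le_rk hMfin (hMI.inter_right F') inter_subset_right
      omega

/-- Every flat of `M` is a flat of its free `m`-cone `Q`, and `Q|E = M`. -/
theorem flats_and_restriction {M Q : Matroid α} {T : α → Set α} {a : α} {m : ℕ}
    (hFC : FreeCone M Q T a m) :
    (∀ F, M.IsFlat F → Q.IsFlat F) ∧ Q ↾ M.E = M := by
  have hQfin := QE_finite hFC
  have hMfin := hFC.hMfin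
  have hEQ := ME_subset_QE hFC
  constructor
  · intro F hF
    have hFE := hF.subset_ground
    have hFQ : F ⊆ Q.E := hFE.trans hEQ
    obtain ⟨I, hI⟩ := Q.exists_isBasis F hFQ
    have hIF := hI.subset
    have hIE : I ⊆ M.E := hIF.trans hFE
    have hIQ : Q.Indep I := hI.indep
    have hIM : M.Indep I := (indep_iff_of_freeCone hFC hIE).1 hIQ
    have hclQ : Q.closure F ⊆ F := by
      intro x hxF
      have hxcl : x ∈ Q.closure I := by rw [hI.closure_eq_closure]; exact hxF
      by_cases hxI : x ∈ I
      · exact hIF hxI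
      have hxQ : x ∈ Q.E := Q.closure_subset_ground F hxF
      by_cases hxE : x ∈ M.E
      · have hdep : ¬ Q.Indep (insert x I) := by
          intro hind
          rw [hIQ.insert_indep_iff_of_notMem hxI] at hind
          exact hind.2 hxcl
        have hdepM : ¬ M.Indep (insert x I) := fun h ↦
          hdep ((indep_iff_of_freeCone hFC (insert_subset hxE hIE)).2 h)
        have hxMcl : x ∈ M.closure I := by
          by_contra hcl
          exact hdepM ((hIM.insert_indep_iff_of_notMem hxI).2 ⟨hxE, hcl⟩)
        have hx2 : x ∈ M.closure F := M.closure_subset_closure hIF hxMcl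
        rwa [hF.closure] at hx2
      · exfalso
        have hind : Q.Indep (insert x I) := by
          rw [indep_iff_forall_cyclicFlat hQfin (insert_subset hxQ (hIE.trans hEQ))]
          intro Z hZQ
          rcases (hFC.hcyclic Z).1 hZQ with hZ | ⟨F', hF', hF'ne, rfl⟩
          · rw [hFC.hrank1 Z hZ]
            have hxZ : x ∉ Z := fun h ↦ hxE (hZ.1.subset_ground h)
            have heq : insert x I ∩ Z = I ∩ Z := by
              ext y
              simp only [mem_inter_iff, mem_insert_iff]
              constructor
              · rintro ⟨rfl | hyI, hyZ⟩
                · exact absurd hyZ hxZ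
                · exact ⟨hyI, hyZ⟩
              · exact fun ⟨h1, h2⟩ ↦ ⟨Or.inr h1, h2⟩
            rw [heq]
            exact ncard_le_rk hMfin (hIM.inter_right Z) inter_subset_right
          · rw [hFC.hrank2 F' hF' hF'ne]
            have hsub : insert x I ∩ cone T a F' ⊆ insert x (I ∩ F') := by
              rintro y ⟨hy1, hy2⟩
              rcases hy1 with rfl | hyI
              · exact mem_insert _ _
              · refine Or.inr ⟨hyI, ?_⟩
                have : y ∈ cone T a F' ∩ M.E := ⟨hy2, hIE hyI⟩
                rwa [cone_inter_ground hFC hF'] at this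
            have hfin' : (insert x (I ∩ F')).Finite :=
              ((hMfin.subset hIE).inter_of_left F').insert x
            have h1 : (insert x I ∩ cone T a F').ncard ≤ (insert x (I ∩ F')).ncard :=
              ncard_le_ncard hsub hfin'
            have h2 : (insert x (I ∩ F')).ncard ≤ (I ∩ F').ncard + 1 :=
              ncard_insert_le x _
            have h3 := ncard_le_rk hMfin (hIM.inter_right F') inter_subset_right
            omega
        rw [hIQ.insert_indep_iff_of_notMem hxI] at hind
        exact hind.2 hxcl
    have hcleq : Q.closure F = F := hclQ.antisymm (Q.subset_closure F hFQ)
    rw [← hcleq]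
    exact flat_closure Q F
  · refine Matroid.ext_indep rfl ?_
    intro I hI
    rw [restrict_indep_iff]
    have hIE : I ⊆ M.E := hI
    rw [indep_iff_of_freeCone hFC hIE]
    exact ⟨fun h ↦ h.1, fun h ↦ ⟨h, hIE⟩⟩
end ConePaper
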